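/- For all integers n, k, ℓ with k − 1 > ℓ > 1, ℓ > n − k, and n > k, there exists an n-vertex k-chromatic ℓ-connected simple graph with exactly C(k,2) + C(n−k,2) + (n−k)·(ℓ − (n−k−1)) edges. -/

import Mathlib

open SimpleGraph Finset

/-- `G` is `ℓ`-connected: it has more than `ℓ` vertices and deleting any set of fewer than
`ℓ` vertices leaves a connected graph. -/
def LConnected {V : Type*} [Fintype V] (G : SimpleGraph V) (ℓ : ℕ) : Prop :=
  ℓ < Fintype.card V ∧
    ∀ s : Finset V, s.card < ℓ → (G.induce ((↑s : Set V)ᶜ)).Connected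

def gRel (n k ℓ : ℕ) (u v : Fin n) : Prop :=
  (u.val < k ∧ v.val < k) ∨ (k ≤ u.val ∧ k ≤ v.val) ∨
    (k ≤ u.val ∧ v.val < k ∧ u.val ≤ v.val + k ∧ v.val + n ≤ u.val + ℓ)

instance gRel.decidable (n k ℓ : ℕ) (u v : Fin n) : Decidable (gRel n k ℓ u v) := by
  unfold gRel; infer_instance

def myG (n k ℓ : ℕ) : SimpleGraph (Fin n) := SimpleGraph.fromRel (gRel n k ℓ)

instance myG.adjDecidable (n k ℓ : ℕ) : DecidableRel (myG n k ℓ).Adj := fun u v =>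
  decidable_of_iff (u ≠ v ∧ (gRel n k ℓ u v ∨ gRel n k ℓ v u)) Iff.rfl

lemma myG_adj {n k ℓ : ℕ} {u v : Fin n} :
    (myG n k ℓ).Adj u v ↔ u ≠ v ∧ (gRel n k ℓ u v ∨ gRel n k ℓ v u) := Iff.rfl

lemma myG_adj_cross {n k ℓ : ℕ} (hn : n < k + ℓ) (hnk : k < n) {u c : Fin n}
    (hu : k ≤ u.val) (hc : c.val < k) :
    (myG n k ℓ).Adj u c ↔ (u.val - k ≤ c.val ∧ c.val ≤ u.val - k + (ℓ - (n - k))) := by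
  rw [myG_adj]
  unfold gRel
  constructor
  · rintro ⟨hne, (h | h) | (h | h)⟩ <;> omega
  · rintro ⟨h1, h2⟩
    refine ⟨fun h => by simp [Fin.ext_iff] at h; omega, ?_⟩
    left; right; right
    omega

lemma myG_adj_core {n k ℓ : ℕ} {u v : Fin n} (hu : u.val < k) (hv : v.val < k)
    (hne : u ≠ v) : (myG n k ℓ).Adj u v :=
  myG_adj.mpr ⟨hne, Or.inl (Or.inl ⟨hu, hv⟩)⟩

lemma myG_adj_extra {n k ℓ : ℕ} {u v : Fin n} (hu : k ≤ u.val) (hv : k ≤ v.val)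
    (hne : u ≠ v) : (myG n k ℓ).Adj u v :=
  myG_adj.mpr ⟨hne, Or.inl (Or.inr (Or.inl ⟨hu, hv⟩))⟩

/-- Counting argument: if fewer than `ℓ` vertices are deleted and some extra vertex
survives, then some surviving extra vertex has a surviving core neighbor. -/
lemma cross_exists (n k ℓ : ℕ) (hℓk : ℓ + 1 < k) (hℓ : 1 < ℓ) (hn : n < k + ℓ)
    (hnk : k < n) (s : Finset (Fin n)) (hs : s.card < ℓ)
    (a : Fin n) (ha : k ≤ a.val) (has : a ∉ s) :
    ∃ x c : Fin n, k ≤ x.val ∧ x ∉ s ∧ c.val < k ∧ c ∉ s ∧ (myG n k ℓ).Adj x c := by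
  by_contra hcon
  push_neg at hcon
  have hEdef : ∀ x ∈ Finset.Ico k n, x < n := fun x hx => by
    simp only [Finset.mem_Ico] at hx; omega
  set E : Finset (Fin n) := (Finset.Ico k n).attachFin hEdef with hE
  have hEcard : E.card = n - k := by rw [hE, Finset.card_attachFin, Nat.card_Ico]
  set R : Finset (Fin n) := E \ s with hR
  have haR : a ∈ R := by
    rw [hR, Finset.mem_sdiff]
    exact ⟨by rw [hE, Finset.mem_attachFin, Finset.mem_Ico]; exact ⟨ha, a.isLt⟩, has⟩
  set Rn : Finset ℕ := R.image (fun v => v.val - k) with hRn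
  have hRmem : ∀ v ∈ R, k ≤ v.val := by
    intro v hv
    rw [hR, Finset.mem_sdiff, hE, Finset.mem_attachFin, Finset.mem_Ico] at hv
    exact hv.1.1
  have hRncard : Rn.card = R.card := by
    rw [hRn]
    apply Finset.card_image_of_injOn
    intro u hu v hv huv
    have hu' := hRmem u hu
    have hv' := hRmem v hv
    have huv' : u.val - k = v.val - k := huv
    exact Fin.ext (by omega)
  have hRnne : Rn.Nonempty := ⟨a.val - k, Finset.mem_image.mpr ⟨a, haR, rfl⟩⟩
  set i := Rn.min' hRnne with hi
  set U : Finset ℕ := Rn.biUnion (fun x => Finset.Icc x (x + (ℓ - (n - k)))) with hU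
  -- lower bound on |U|
  have hUge : (ℓ - (n - k)) + R.card ≤ U.card := by
    have hsub : Finset.Ico i (i + (ℓ - (n - k))) ∪ Rn.image (· + (ℓ - (n - k))) ⊆ U := by
      apply Finset.union_subset
      · intro c hc
        rw [Finset.mem_Ico] at hc
        exact Finset.mem_biUnion.mpr ⟨i, Rn.min'_mem hRnne, Finset.mem_Icc.mpr (by omega)⟩
      · intro c hc
        obtain ⟨x, hx, rfl⟩ := Finset.mem_image.mp hc
        exact Finset.mem_biUnion.mpr ⟨x, hx, Finset.mem_Icc.mpr (by omega)⟩
    have hdisj : Disjoint (Finset.Ico i (i + (ℓ - (n - k)))) (Rn.image (· + (ℓ - (n - k)))) := by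
      rw [Finset.disjoint_left]
      intro c hc hc'
      rw [Finset.mem_Ico] at hc
      obtain ⟨x, hx, rfl⟩ := Finset.mem_image.mp hc'
      have := Rn.min'_le x hx
      omega
    calc (ℓ - (n - k)) + R.card
        = (Finset.Ico i (i + (ℓ - (n - k)))).card + (Rn.image (· + (ℓ - (n - k)))).card := by
          rw [Nat.card_Ico, Finset.card_image_of_injective _ (add_left_injective _),
            hRncard]
          omega
      _ = (Finset.Ico i (i + (ℓ - (n - k))) ∪ Rn.image (· + (ℓ - (n - k)))).card :=
          (Finset.card_union_of_disjoint hdisj).symm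
      _ ≤ U.card := Finset.card_le_card hsub
  -- U is contained in the deleted core vertices
  have hUsub : U ⊆ (s.filter (fun v => v.val < k)).image Fin.val := by
    intro c hc
    obtain ⟨x, hx, hcx⟩ := Finset.mem_biUnion.mp hc
    rw [Finset.mem_Icc] at hcx
    obtain ⟨v, hvR, rfl⟩ := Finset.mem_image.mp hx
    have hvk := hRmem v hvR
    have hvs : v ∉ s := (Finset.mem_sdiff.mp hvR).2
    have hcx' : v.val - k ≤ c ∧ c ≤ v.val - k + (ℓ - (n - k)) := hcx
    have hck : c < k := by omega
    have hcn : c < n := by omega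
    have hadj : (myG n k ℓ).Adj v ⟨c, hcn⟩ := by
      rw [myG_adj_cross hn hnk hvk (show (⟨c, hcn⟩ : Fin n).val < k from hck)]
      exact hcx'
    have hcs : (⟨c, hcn⟩ : Fin n) ∈ s := by
      by_contra hcs
      exact hcon v ⟨c, hcn⟩ hvk hvs hck hcs hadj
    exact Finset.mem_image.mpr ⟨⟨c, hcn⟩, Finset.mem_filter.mpr ⟨hcs, hck⟩, rfl⟩
  have hUle : U.card ≤ (s.filter (fun v => v.val < k)).card :=
    le_trans (Finset.card_le_card hUsub) Finset.card_image_le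
  -- the deleted extras number (n-k) - R.card
  have hsE : s.filter (fun v => k ≤ v.val) = E ∩ s := by
    ext v
    rw [Finset.mem_filter, Finset.mem_inter, hE, Finset.mem_attachFin, Finset.mem_Ico]
    exact ⟨fun ⟨h1, h2⟩ => ⟨⟨h2, v.isLt⟩, h1⟩, fun ⟨⟨h1, _⟩, h2⟩ => ⟨h2, h1⟩⟩
  have hEsplit : (E \ s).card + (E ∩ s).card = E.card := Finset.card_sdiff_add_card_inter E s
  have hnegsplit : s.filter (fun v => ¬ v.val < k) = s.filter (fun v => k ≤ v.val) :=
    Finset.filter_congr (fun v _ => by rw [not_lt])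
  have hsplit : (s.filter (fun v => v.val < k)).card + (s.filter (fun v => k ≤ v.val)).card
      = s.card := by
    rw [← hnegsplit]
    exact Finset.card_filter_add_card_filter_not (s := s) (p := fun v => v.val < k)
  rw [hsE] at hsplit
  rw [← hR] at hEsplit
  omega

lemma myG_lconnected (n k ℓ : ℕ) (hℓk : ℓ + 1 < k) (hℓ : 1 < ℓ) (hn : n < k + ℓ)
    (hnk : k < n) : LConnected (myG n k ℓ) ℓ := by
  constructor
  · rw [Fintype.card_fin]; omega
  intro s hs
  -- find a surviving core vertex (the pivot)
  have hCdef : ∀ x ∈ Finset.range k, x < n := fun x hx => by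
    simp only [Finset.mem_range] at hx; omega
  have hnotsub : ¬ ((Finset.range k).attachFin hCdef ⊆ s) := by
    intro h
    have h1 := Finset.card_le_card h
    rw [Finset.card_attachFin, Finset.card_range] at h1
    omega
  obtain ⟨p, hpC, hps⟩ := Finset.not_subset.mp hnotsub
  have hpk : p.val < k := by
    rw [Finset.mem_attachFin, Finset.mem_range] at hpC; exact hpC
  have hmem : ∀ {v : Fin n}, v ∉ s → v ∈ ((↑s : Set (Fin n))ᶜ) := fun {v} hv => by
    simpa using hv
  have hadjInd : ∀ {u v : ((↑s : Set (Fin n))ᶜ : Set (Fin n))},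
      (myG n k ℓ).Adj u.val v.val → ((myG n k ℓ).induce ((↑s : Set (Fin n))ᶜ)).Adj u v :=
    fun {u v} h => by simpa [comap_adj] using h
  have key : ∀ a : ((↑s : Set (Fin n))ᶜ : Set (Fin n)),
      ((myG n k ℓ).induce ((↑s : Set (Fin n))ᶜ)).Reachable a ⟨p, hmem hps⟩ := by
    rintro ⟨a, haS⟩
    have has : a ∉ s := by simpa using haS
    by_cases hak : a.val < k
    · rcases eq_or_ne a p with rfl | hap
      · exact Reachable.refl _
      · exact (hadjInd (myG_adj_core hak hpk hap)).reachable
    · push_neg at hak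
      obtain ⟨x, c, hxk, hxs, hck, hcs, hadj⟩ :=
        cross_exists n k ℓ hℓk hℓ hn hnk s hs a hak has
      have r1 : ((myG n k ℓ).induce ((↑s : Set (Fin n))ᶜ)).Reachable ⟨a, haS⟩ ⟨x, hmem hxs⟩ := by
        rcases eq_or_ne a x with rfl | hax
        · exact Reachable.refl _
        · exact (hadjInd (myG_adj_extra hak hxk hax)).reachable
      have r2 : ((myG n k ℓ).induce ((↑s : Set (Fin n))ᶜ)).Reachable ⟨x, hmem hxs⟩
          ⟨c, hmem hcs⟩ := (hadjInd hadj).reachable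
      have r3 : ((myG n k ℓ).induce ((↑s : Set (Fin n))ᶜ)).Reachable ⟨c, hmem hcs⟩
          ⟨p, hmem hps⟩ := by
        rcases eq_or_ne c p with rfl | hcp
        · exact Reachable.refl _
        · exact (hadjInd (myG_adj_core hck hpk hcp)).reachable
      exact (r1.trans r2).trans r3
  have : Nonempty ((↑s : Set (Fin n))ᶜ : Set (Fin n)) := ⟨⟨p, hmem hps⟩⟩
  exact ⟨fun u v => (key u).trans (key v).symm⟩

lemma two_mul_choose_two (a : ℕ) : 2 * a.choose 2 = a * a - a := by
  induction a with
  | zero => rfl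
  | succ b ih =>
    rw [Nat.choose_succ_succ, Nat.choose_one_right, Nat.mul_add, ih]
    have : (b+1)*(b+1) = b*b + 2*b + 1 := by ring
    have hb : b ≤ b * b := by nlinarith
    omega

lemma myG_edge_count (n k ℓ : ℕ) (hℓk : ℓ + 1 < k) (hℓ : 1 < ℓ) (hn : n < k + ℓ) (hnk : k < n) :
    (myG n k ℓ).edgeFinset.card =
      Nat.choose k 2 + Nat.choose (n - k) 2 + (n - k) * (ℓ - (n - k - 1)) := by
  set m := n - k with hm
  set d := ℓ - m with hd
  have hkn : k ≤ n := hnk.le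
  have hCdef : ∀ x ∈ Finset.range k, x < n := fun x hx => by
    simp only [Finset.mem_range] at hx; omega
  have hEdef : ∀ x ∈ Finset.Ico k n, x < n := fun x hx => by
    simp only [Finset.mem_Ico] at hx; omega
  set C : Finset (Fin n) := (Finset.range k).attachFin hCdef with hC
  set E : Finset (Fin n) := (Finset.Ico k n).attachFin hEdef with hE
  have hCcard : C.card = k := by rw [hC, Finset.card_attachFin, Finset.card_range]
  have hEcard : E.card = m := by rw [hE, Finset.card_attachFin, Nat.card_Ico]
  set D : Finset (Fin n × Fin n) :=
    Finset.univ.filter (fun p => (myG n k ℓ).Adj p.1 p.2) with hD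
  -- split D into four parts
  have hsplit : D.card =
      (D.filter (fun p => p.1.val < k ∧ p.2.val < k)).card +
      (D.filter (fun p => k ≤ p.1.val ∧ k ≤ p.2.val)).card +
      (D.filter (fun p => k ≤ p.1.val ∧ p.2.val < k)).card +
      (D.filter (fun p => p.1.val < k ∧ k ≤ p.2.val)).card := by
    have h1 := Finset.card_filter_add_card_filter_not
      (s := D) (p := fun p => p.1.val < k)
    have h2 := Finset.card_filter_add_card_filter_not
      (s := D.filter (fun p => p.1.val < k)) (p := fun p => p.2.val < k)
    have h3 := Finset.card_filter_add_card_filter_not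
      (s := D.filter (fun p => ¬ p.1.val < k)) (p := fun p => p.2.val < k)
    have e1 : (D.filter (fun p => p.1.val < k)).filter (fun p => p.2.val < k)
        = D.filter (fun p => p.1.val < k ∧ p.2.val < k) := by
      rw [Finset.filter_filter]
    have e2 : (D.filter (fun p => p.1.val < k)).filter (fun p => ¬ p.2.val < k)
        = D.filter (fun p => p.1.val < k ∧ k ≤ p.2.val) := by
      rw [Finset.filter_filter]
      exact Finset.filter_congr (fun p _ => by rw [not_lt])
    have e3 : (D.filter (fun p => ¬ p.1.val < k)).filter (fun p => p.2.val < k)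
        = D.filter (fun p => k ≤ p.1.val ∧ p.2.val < k) := by
      rw [Finset.filter_filter]
      exact Finset.filter_congr (fun p _ => by rw [not_lt])
    have e4 : (D.filter (fun p => ¬ p.1.val < k)).filter (fun p => ¬ p.2.val < k)
        = D.filter (fun p => k ≤ p.1.val ∧ k ≤ p.2.val) := by
      rw [Finset.filter_filter]
      exact Finset.filter_congr (fun p _ => by rw [not_lt, not_lt])
    rw [e1, e2] at h2
    rw [e3, e4] at h3
    omega
  -- core-core part
  have hcc : (D.filter (fun p => p.1.val < k ∧ p.2.val < k)) = C.offDiag := by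
    ext p
    simp only [hD, Finset.mem_filter, Finset.mem_univ, true_and, Finset.mem_offDiag,
      hC, Finset.mem_attachFin, Finset.mem_range, myG_adj]
    constructor
    · rintro ⟨⟨hne, _⟩, h1, h2⟩ ; exact ⟨h1, h2, hne⟩
    · rintro ⟨h1, h2, hne⟩
      exact ⟨⟨hne, Or.inl (Or.inl ⟨h1, h2⟩)⟩, h1, h2⟩
  have hee : (D.filter (fun p => k ≤ p.1.val ∧ k ≤ p.2.val)) = E.offDiag := by
    ext p
    simp only [hD, Finset.mem_filter, Finset.mem_univ, true_and, Finset.mem_offDiag,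
      hE, Finset.mem_attachFin, Finset.mem_Ico, myG_adj]
    constructor
    · rintro ⟨⟨hne, _⟩, h1, h2⟩ ; exact ⟨⟨h1, p.1.isLt⟩, ⟨h2, p.2.isLt⟩, hne⟩
    · rintro ⟨h1, h2, hne⟩
      exact ⟨⟨hne, Or.inl (Or.inr (Or.inl ⟨h1.1, h2.1⟩))⟩, h1.1, h2.1⟩
  -- extra-core part
  have hec : (D.filter (fun p => k ≤ p.1.val ∧ p.2.val < k)).card = m * (d + 1) := by
    rw [Finset.card_eq_sum_card_fiberwise
      (f := Prod.fst) (t := E) (fun p hp => by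
        simp only [hD, Finset.coe_filter, Finset.mem_filter, Set.mem_setOf_eq] at hp
        simp only [hE, Finset.mem_coe, Finset.mem_attachFin, Finset.mem_Ico]
        exact ⟨hp.2.1, p.1.isLt⟩)]
    have hfiber : ∀ u ∈ E,
        ((D.filter (fun p => k ≤ p.1.val ∧ p.2.val < k)).filter (fun p => p.1 = u)).card
          = d + 1 := by
      intro u hu
      have hu' : k ≤ u.val := by
        simp only [hE, Finset.mem_attachFin, Finset.mem_Ico] at hu; exact hu.1
      have hicc : ∀ x ∈ Finset.Icc (u.val - k) (u.val - k + d), x < n := by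
        intro x hx; simp only [Finset.mem_Icc] at hx; omega
      have : (D.filter (fun p => k ≤ p.1.val ∧ p.2.val < k)).filter (fun p => p.1 = u)
          = ((Finset.Icc (u.val - k) (u.val - k + d)).attachFin hicc).map
            ⟨fun c => (u, c), fun a b hab => by simpa [Prod.ext_iff] using hab⟩ := by
        ext p
        simp only [hD, Finset.mem_filter, Finset.mem_univ, true_and, Finset.mem_map,
          Finset.mem_attachFin, Finset.mem_Icc, Function.Embedding.coeFn_mk]
        constructor
        · rintro ⟨⟨hadj, h1, h2⟩, rfl⟩
          rw [myG_adj_cross hn hnk h1 h2] at hadj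
          exact ⟨p.2, ⟨hadj.1, hadj.2⟩, rfl⟩
        · rintro ⟨c, ⟨hc1, hc2⟩, rfl⟩
          have hck : c.val < k := by omega
          refine ⟨⟨(myG_adj_cross hn hnk hu' hck).mpr ⟨hc1, hc2⟩, hu', hck⟩, rfl⟩
      rw [this, Finset.card_map, Finset.card_attachFin, Nat.card_Icc]
      omega
    rw [Finset.sum_congr rfl hfiber, Finset.sum_const, hEcard, smul_eq_mul]
  -- core-extra part
  have hce : (D.filter (fun p => p.1.val < k ∧ k ≤ p.2.val)) =
      (D.filter (fun p => k ≤ p.1.val ∧ p.2.val < k)).image Prod.swap := by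
    ext p
    simp only [hD, Finset.mem_filter, Finset.mem_univ, true_and, Finset.mem_image]
    constructor
    · rintro ⟨hadj, h1, h2⟩
      exact ⟨p.swap, ⟨hadj.symm, h2, h1⟩, Prod.swap_swap p⟩
    · rintro ⟨q, ⟨hadj, h1, h2⟩, rfl⟩
      exact ⟨hadj.symm, h2, h1⟩
  -- put everything together
  have htwo := SimpleGraph.two_mul_card_edgeFinset (G := myG n k ℓ)
  have hDcard : (Finset.univ.filter fun (x, y) => (myG n k ℓ).Adj x y) = D := rfl
  rw [hDcard] at htwo
  rw [hsplit, hcc, hee, hce, Finset.card_image_of_injective _ Prod.swap_injective,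
    hec, Finset.offDiag_card, Finset.offDiag_card, hCcard, hEcard] at htwo
  have h2k := two_mul_choose_two k
  have h2m := two_mul_choose_two m
  have hmd : ℓ - (m - 1) = d + 1 := by omega
  have hkk : k ≤ k * k := Nat.le_mul_of_pos_left k (by omega)
  have hmm : m ≤ m * m := Nat.le_mul_of_pos_left m (by omega)
  rw [hmd]
  omega

lemma myG_chrom (n k ℓ : ℕ) (hℓk : ℓ + 1 < k) (hn : n < k + ℓ) (hnk : k < n) :
    (myG n k ℓ).chromaticNumber = k := by
  have hkn : k ≤ n := hnk.le
  refine le_antisymm ?_ ?_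
  · -- colorable with k colors
    have : (myG n k ℓ).Colorable k := by
      refine ⟨Coloring.mk (fun v => if h : v.val < k then ⟨v.val, h⟩
        else ⟨v.val - k + (ℓ - (n - k)) + 1, by omega⟩) ?_⟩
      intro u v hadj
      rw [myG_adj] at hadj
      obtain ⟨hne, h⟩ := hadj
      have hne' : u.val ≠ v.val := fun hv => hne (Fin.ext hv)
      rcases h with (⟨h1, h2⟩ | ⟨h1, h2⟩ | ⟨h1, h2, h3, h4⟩) | (⟨h1, h2⟩ | ⟨h1, h2⟩ | ⟨h1, h2, h3, h4⟩) <;>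
        [skip; skip; skip; skip; skip; skip] <;>
        · intro hc
          first
          | (rw [dif_pos h1, dif_pos h2] at hc; simp at hc; omega)
          | (rw [dif_neg (by omega : ¬ u.val < k), dif_neg (by omega : ¬ v.val < k)] at hc;
             simp at hc; omega)
          | (rw [dif_neg (by omega : ¬ u.val < k), dif_pos h2] at hc; simp at hc; omega)
          | (rw [dif_pos h2, dif_neg (by omega : ¬ v.val < k)] at hc; simp at hc; omega)
          | (rw [dif_pos h1, dif_neg (by omega : ¬ v.val < k)] at hc; simp at hc; omega)
          | (rw [dif_neg (by omega : ¬ u.val < k), dif_pos h1] at hc; simp at hc; omega)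
    exact this.chromaticNumber_le
  · -- clique of size k
    have hclique : (myG n k ℓ).IsClique ((Finset.range k).attachFin
        (fun m hm => lt_of_lt_of_le (Finset.mem_range.mp hm) hkn)) := by
      intro a ha b hb hab
      simp only [Finset.coe_sort_coe, Finset.mem_coe, Finset.mem_attachFin,
        Finset.mem_range] at ha hb
      exact myG_adj.mpr ⟨hab, Or.inl (Or.inl ⟨ha, hb⟩)⟩
    have := hclique.card_le_chromaticNumber
    rwa [Finset.card_attachFin, Finset.card_range] at this

theorem min_edges_gt_case_sharp (n k ℓ : ℕ)
    (hℓk : ℓ + 1 < k) (hℓ : 1 < ℓ) (hn : n < k + ℓ) (hnk : k < n) :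
    ∃ G : SimpleGraph (Fin n),
      G.chromaticNumber = k ∧ LConnected G ℓ ∧
        Nat.card G.edgeSet =
          Nat.choose k 2 + Nat.choose (n - k) 2 + (n - k) * (ℓ - (n - k - 1)) := by
  refine ⟨myG n k ℓ, myG_chrom n k ℓ hℓk hn hnk, myG_lconnected n k ℓ hℓk hℓ hn hnk, ?_⟩
  rw [Nat.card_eq_fintype_card, ← Set.toFinset_card]
  exact myG_edge_count n k ℓ hℓk hℓ hn hnk
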